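/- Let R be a reduced commutative ring with exactly n minimal prime ideals (n finite), and set T = ∏_{p ∈ min(R)} (R/p)⁺ with its canonical R-algebra structure. An absolute integral closure S of R is R-isomorphic to T if and only if S has exactly 2^n idempotent elements. -/

import Mathlib

/-- A ring extension `f : R →+* S` is *tight* if every nonzero ideal of `S` contracts to a
nonzero ideal of `R`. -/
def Tight {R S : Type*} [CommRing R] [CommRing S] (f : R →+* S) : Prop :=
  ∀ s : S, s ≠ 0 → ∃ t : S, ∃ r : R, r ≠ 0 ∧ s * t = f r

/-- A commutative ring `S` is *absolutely integrally closed* if every monic polynomial of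
positive degree over `S` has a root in `S`. -/
def AIClosed (S : Type*) [CommRing S] : Prop :=
  ∀ p : Polynomial S, p.Monic → 0 < p.degree → ∃ x : S, p.IsRoot x

/-- `f : R →+* S` realizes `S` as an *absolute integral closure* of `R`. -/
def IsAIC {R S : Type*} [CommRing R] [CommRing S] (f : R →+* S) : Prop :=
  Function.Injective f ∧ f.IsIntegral ∧ Tight f ∧ AIClosed S

/-- Minimal primes are prime. -/
instance minimalPrimes.isPrime' {R : Type u} [CommRing R] (p : minimalPrimes R) :
    (p : Ideal R).IsPrime := p.2.1.1

/-- The canonical map `R → T = ∏_{p ∈ min(R)} (R/p)⁺`. -/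
noncomputable def minPlusMap (R : Type u) [CommRing R] :
    R →+* ∀ p : minimalPrimes R,
      integralClosure (R ⧸ (p : Ideal R))
        (AlgebraicClosure (FractionRing (R ⧸ (p : Ideal R)))) :=
  Pi.ringHom fun p =>
    (algebraMap (R ⧸ (p : Ideal R))
      (integralClosure (R ⧸ (p : Ideal R))
        (AlgebraicClosure (FractionRing (R ⧸ (p : Ideal R)))))).comp
      (Ideal.Quotient.mk (p : Ideal R))

namespace AICAux

section Basic

theorem isReduced_of_tight {R S : Type u} [CommRing R] [CommRing S] (g : R →+* S) [IsReduced R] (hinj : Function.Injective g)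
    (ht : Tight g) : IsReduced S := by
  rw [isReduced_iff]
  intro s ⟨k, hk⟩
  by_contra hs
  obtain ⟨t, r, hr, hst⟩ := ht s hs
  have h1 : g (r ^ k) = 0 := by
    rw [map_pow, ← hst, mul_pow, hk, zero_mul]
  have h2 : r ^ k = 0 := by
    apply hinj; rw [h1, map_zero]
  exact hr (IsReduced.eq_zero r ⟨k, h2⟩)

theorem aiclosed_of_surjective {S : Type u} [CommRing S] {S' : Type v} [CommRing S'] (h : AIClosed S)
    (f : S →+* S') (hf : Function.Surjective f) : AIClosed S' := by
  intro p hp hdeg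
  rcases subsingleton_or_nontrivial S' with hS' | hS'
  · exact ⟨0, Subsingleton.elim _ _⟩
  have : Nontrivial S := f.domain_nontrivial
  obtain ⟨q, hlift, hdeg', hq⟩ := Polynomial.lifts_and_natDegree_eq_and_monic
    (Polynomial.lifts_iff_coeff_lifts p |>.mpr fun n => hf _) hp
  have hqdeg : 0 < q.degree := by
    rw [Polynomial.degree_eq_natDegree hq.ne_zero, hdeg']
    rw [Polynomial.degree_eq_natDegree hp.ne_zero] at hdeg
    exact_mod_cast hdeg
  obtain ⟨x, hx⟩ := h q hq hqdeg
  refine ⟨f x, ?_⟩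
  show Polynomial.eval (f x) p = 0
  rw [← hlift, Polynomial.eval_map, Polynomial.eval₂_at_apply, hx, map_zero]

/-- In an AI-closed ring, every monic polynomial splits into linear factors. -/
theorem aiclosed_splits {S : Type u} [CommRing S] (h : AIClosed S) (p : Polynomial S) (hp : p.Monic) :
    ∃ m : Multiset S, p = (m.map fun a => Polynomial.X - Polynomial.C a).prod := by
  generalize hd : p.natDegree = d
  induction d generalizing p with
  | zero =>
    rcases subsingleton_or_nontrivial S with hS | hS
    · exact ⟨0, Subsingleton.elim _ _⟩
    refine ⟨0, ?_⟩
    simpa using (Polynomial.Monic.natDegree_eq_zero hp).mp hd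
  | succ d ih =>
    rcases subsingleton_or_nontrivial S with hS | hS
    · exact ⟨0, Subsingleton.elim _ _⟩
    have hdeg : 0 < p.degree := by
      rw [Polynomial.degree_eq_natDegree hp.ne_zero, hd]; exact_mod_cast Nat.succ_pos d
    obtain ⟨x, hx⟩ := h p hp hdeg
    have hdvd : Polynomial.X - Polynomial.C x ∣ p := Polynomial.dvd_iff_isRoot.mpr hx
    obtain ⟨q, hq⟩ := hdvd
    have hqmonic : q.Monic := by
      have hxm : (Polynomial.X - Polynomial.C x).Monic := Polynomial.monic_X_sub_C x
      exact (Polynomial.Monic.of_mul_monic_left hxm (hq ▸ hp))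
    have hqd : q.natDegree = d := by
      have := congrArg Polynomial.natDegree hq
      rw [Polynomial.Monic.natDegree_mul (Polynomial.monic_X_sub_C x) hqmonic,
        Polynomial.natDegree_X_sub_C, hd] at this
      omega
    obtain ⟨m, hm⟩ := ih q hqmonic hqd
    exact ⟨x ::ₘ m, by rw [hq, hm, Multiset.map_cons, Multiset.prod_cons, ← hm]⟩

end Basic

section MinPrimes

variable {R S : Type u} [CommRing R] [CommRing S]

theorem sInf_minimalPrimes_eq_bot (R : Type u) [CommRing R] [IsReduced R] :
    sInf (minimalPrimes R) = ⊥ := by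
  have h := nilradical_eq_zero R
  rw [nilradical, Ideal.zero_eq_bot] at h
  rw [minimalPrimes, Ideal.sInf_minimalPrimes, h]

theorem exists_mul_eq_zero_of_mem_minimalPrime [IsReduced S] {q : Ideal S}
    (hq : q ∈ minimalPrimes S) {a : S} (ha : a ∈ q) : ∃ y : S, y ∉ q ∧ a * y = 0 := by
  haveI : q.IsPrime := hq.1.1
  have hnil : IsNilpotent (algebraMap S (Localization q.primeCompl) a) :=
    (haveI := Ring.KrullDimLE.of_isLocalization q hq (Localization q.primeCompl); Ring.KrullDimLE.isNilpotent_iff_mem_maximalIdeal (R := Localization q.primeCompl)).mpr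
      ((IsLocalization.AtPrime.to_map_mem_maximal_iff (Localization q.primeCompl) q a).mpr ha)
  obtain ⟨k, hk⟩ := hnil
  rw [← map_pow] at hk
  obtain ⟨m, hm⟩ := (IsLocalization.map_eq_zero_iff q.primeCompl (Localization q.primeCompl) _).mp hk
  cases k with
  | zero =>
    have hm0 : (m : S) = 0 := by simpa using hm
    exact absurd (hm0 ▸ m.2) (by simpa [Ideal.primeCompl] using q.zero_mem)
  | succ j =>
    refine ⟨(m : S), m.2, ?_⟩
    have h2 : (a * (m : S)) ^ (j + 1) = ((m : S) * a ^ (j + 1)) * (m : S) ^ j := by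
      rw [mul_pow, pow_succ]; ring
    rw [hm, zero_mul] at h2
    exact IsReduced.eq_zero _ ⟨j + 1, h2⟩

variable [IsReduced R]

theorem comap_minimalPrime (g : R →+* S) (hfin : (minimalPrimes R).Finite)
    (hinj : Function.Injective g) (ht : Tight g) [IsReduced S]
    {q : Ideal S} (hq : q ∈ minimalPrimes S) : q.comap g ∈ minimalPrimes R := by
  haveI : q.IsPrime := hq.1.1
  have hzd : ∀ x ∈ q.comap g, ∃ p ∈ minimalPrimes R, x ∈ p := by
    intro x hx
    obtain ⟨y, hy, hxy⟩ := exists_mul_eq_zero_of_mem_minimalPrime hq hx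
    have hy0 : y ≠ 0 := fun h => hy (h ▸ q.zero_mem)
    obtain ⟨t, r, hr, hyt⟩ := ht y hy0
    have hxr : x * r = 0 := by
      apply hinj
      rw [map_mul, ← hyt, map_zero, ← mul_assoc, hxy, zero_mul]
    have hex : ∃ p ∈ minimalPrimes R, r ∉ p := by
      by_contra hall
      push_neg at hall
      have : r ∈ sInf (minimalPrimes R) := Ideal.mem_sInf.mpr fun {I} hI => hall I hI
      rw [sInf_minimalPrimes_eq_bot R, Ideal.mem_bot] at this
      exact hr this
    obtain ⟨p, hp, hrp⟩ := hex
    refine ⟨p, hp, ?_⟩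
    have : x * r ∈ p := hxr ▸ p.zero_mem
    exact ((hp.1.1.mem_or_mem this).resolve_right hrp)
  have hsub : (q.comap g : Set R) ⊆ ⋃ p ∈ hfin.toFinset, (p : Set R) := by
    intro x hx
    obtain ⟨p, hp, hxp⟩ := hzd x hx
    exact Set.mem_biUnion (hfin.mem_toFinset.mpr hp) hxp
  have hne : ∃ p ∈ hfin.toFinset, q.comap g ≤ p := by
    have := (Ideal.subset_union_prime (⊥ : Ideal R) (⊥ : Ideal R)
      (fun p hp _ _ => (hfin.mem_toFinset.mp hp).1.1)).mp hsub
    exact this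
  obtain ⟨p, hpmem, hle⟩ := hne
  have hp : p ∈ minimalPrimes R := hfin.mem_toFinset.mp hpmem
  haveI : (q.comap g).IsPrime := Ideal.IsPrime.comap g
  obtain ⟨p₀, hp₀, hp₀le⟩ := Ideal.exists_minimalPrimes_le (bot_le : (⊥ : Ideal R) ≤ q.comap g)
  have : p ≤ p₀ := hp.2 ⟨hp₀.1.1, bot_le⟩ (hp₀le.trans hle)
  have heq : q.comap g = p₀ := le_antisymm (hle.trans this) hp₀le
  exact heq ▸ hp₀

theorem exists_minimalPrime_comap_eq (g : R →+* S) (hinj : Function.Injective g)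
    (hint : g.IsIntegral) {p : Ideal R} (hp : p ∈ minimalPrimes R) :
    ∃ q ∈ minimalPrimes S, q.comap g = p := by
  letI : Algebra R S := g.toAlgebra
  haveI : Algebra.IsIntegral R S := ⟨fun x => hint x⟩
  haveI : p.IsPrime := hp.1.1
  have hker : (⊥ : Ideal S).comap (algebraMap R S) ≤ p := by
    rw [← RingHom.ker_eq_comap_bot]
    rw [show algebraMap R S = g from rfl, (RingHom.injective_iff_ker_eq_bot g).mp hinj]
    exact bot_le
  obtain ⟨Q, -, hQprime, hQcomap⟩ := Ideal.exists_ideal_over_prime_of_isIntegral p ⊥ hker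
  haveI := hQprime
  obtain ⟨q, hq, hqle⟩ := Ideal.exists_minimalPrimes_le (bot_le : (⊥ : Ideal S) ≤ Q)
  refine ⟨q, hq, ?_⟩
  have hle : q.comap g ≤ p := hQcomap ▸ Ideal.comap_mono hqle
  haveI : q.IsPrime := hq.1.1
  haveI : (q.comap g).IsPrime := Ideal.IsPrime.comap g
  obtain ⟨p₀, hp₀, hp₀le⟩ := Ideal.exists_minimalPrimes_le (bot_le : (⊥ : Ideal R) ≤ q.comap g)
  have hple : p ≤ p₀ := hp.2 ⟨hp₀.1.1, bot_le⟩ (hp₀le.trans hle)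
  exact le_antisymm hle (hple.trans hp₀le)

theorem minimalPrime_comap_injOn [IsReduced S] (g : R →+* S)
    (hfin : (minimalPrimes R).Finite) (hinj : Function.Injective g) (hint : g.IsIntegral)
    (ht : Tight g) {q q' : Ideal S} (hq : q ∈ minimalPrimes S) (hq' : q' ∈ minimalPrimes S)
    (hcomap : q.comap g = q'.comap g) : q = q' := by
  classical
  haveI : q.IsPrime := hq.1.1
  haveI : q'.IsPrime := hq'.1.1
  by_contra hne
  have key : ∀ q₁ q₂ : Ideal S, q₁ ∈ minimalPrimes S → q₂ ∈ minimalPrimes S →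
      q₁.comap g = q₂.comap g → ∀ a ∈ q₁, a ∉ q₂ → False := by
    intro q₁ q₂ hq₁ hq₂ hc a ha ha'
    haveI : q₁.IsPrime := hq₁.1.1
    haveI : q₂.IsPrime := hq₂.1.1
    set p : Ideal R := q₁.comap g with hp
    have hpmin : p ∈ minimalPrimes R := comap_minimalPrime g hfin hinj ht hq₁
    have hx : ∃ x : R, x ∉ p ∧ ∀ p' ∈ minimalPrimes R, p' ≠ p → x ∈ p' := by
      have hnle : ¬((hfin.toFinset.erase p).inf id ≤ p) := by
        intro hle
        obtain ⟨p', hp'mem, hp'le⟩ := (hpmin.1.1.inf_le').mp hle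
        have hp'ne : p' ≠ p := (Finset.mem_erase.mp hp'mem).1
        have hp' : p' ∈ minimalPrimes R := hfin.mem_toFinset.mp (Finset.mem_erase.mp hp'mem).2
        exact hp'ne (le_antisymm hp'le (hpmin.2 ⟨hp'.1.1, bot_le⟩ hp'le))
      obtain ⟨x, hx1, hx2⟩ := SetLike.not_le_iff_exists.mp hnle
      refine ⟨x, hx2, fun p' hp' hne' => ?_⟩
      have : (hfin.toFinset.erase p).inf id ≤ p' :=
        Finset.inf_le (Finset.mem_erase.mpr ⟨hne', hfin.mem_toFinset.mpr hp'⟩)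
      exact this hx1
    obtain ⟨x, hxp, hxall⟩ := hx
    have hgx : g x ∉ q₂ := fun h => hxp (by rw [hc]; exact Ideal.mem_comap.mpr h)
    have hs0 : a * g x ≠ 0 := by
      intro h0
      exact (Ideal.IsPrime.mem_or_mem ‹q₂.IsPrime› (h0 ▸ q₂.zero_mem)).elim ha' hgx
    obtain ⟨t, r, hr, heq⟩ := ht _ hs0
    have hrall : ∀ p'' ∈ minimalPrimes R, r ∈ p'' := by
      intro p'' hp''
      rcases eq_or_ne p'' p with rfl | hne''
      · have : g r ∈ q₁ := heq ▸ q₁.mul_mem_right t (q₁.mul_mem_right (g x) ha)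
        exact this
      · obtain ⟨q'', hq'', hq''c⟩ := exists_minimalPrime_comap_eq g hinj hint hp''
        have hgx'' : g x ∈ q'' := by
          have hx'' : x ∈ q''.comap g := hq''c.symm ▸ hxall p'' hp'' hne''
          exact Ideal.mem_comap.mp hx''
        have hgr : g r ∈ q'' := heq ▸ q''.mul_mem_right t (q''.mul_mem_left a hgx'')
        rw [← hq''c]
        exact Ideal.mem_comap.mpr hgr
    have : r ∈ sInf (minimalPrimes R) := Ideal.mem_sInf.mpr fun {I} hI => hrall I hI
    rw [sInf_minimalPrimes_eq_bot R, Ideal.mem_bot] at this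
    exact hr this
  rcases (em (∀ a ∈ q, a ∈ q')) with hsub | hnsub
  · exact hne (le_antisymm hsub (hq'.2 ⟨hq.1.1, bot_le⟩ hsub))
  · push_neg at hnsub
    obtain ⟨a, ha, ha'⟩ := hnsub
    exact key q q' hq hq' hcomap a ha ha'

end MinPrimes

section Equivs

/-- An `A`-algebra hom from an integral domain `D`, all of whose elements are integral over `A`,
into a field into which `A` injects, is injective. -/
theorem algHom_injective_of_isIntegral {A D Ω : Type*} [CommRing A] [CommRing D] [IsDomain D]
    [Field Ω] [Algebra A D] [Algebra A Ω] (hAΩ : Function.Injective (algebraMap A Ω))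
    (hint : ∀ x : D, IsIntegral A x) (Θ : D →ₐ[A] Ω) : Function.Injective Θ := by
  haveI : Nontrivial A := (algebraMap A Ω).domain_nontrivial
  rw [injective_iff_map_eq_zero]
  intro x hx
  by_contra hx0
  obtain ⟨p, hp, hpx⟩ := hint x
  have haev : Polynomial.aeval x p = 0 := hpx
  clear hpx
  have key : ∀ N : ℕ, ∀ p : Polynomial A, p.Monic → p.natDegree ≤ N →
      Polynomial.aeval x p = 0 → False := by
    intro N
    induction N with
    | zero =>
      intro p hp hdeg hev
      have hone : p = 1 := hp.natDegree_eq_zero.mp (Nat.le_zero.mp hdeg)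
      rw [hone, map_one] at hev
      exact one_ne_zero hev
    | succ N ih =>
      intro p hp hdeg hev
      rcases Nat.eq_zero_or_pos p.natDegree with h0 | hpos
      · have hone : p = 1 := hp.natDegree_eq_zero.mp h0
        rw [hone, map_one] at hev
        exact one_ne_zero hev
      have hc0 : p.coeff 0 = 0 := by
        apply hAΩ
        rw [map_zero]
        have h1 : Polynomial.aeval (Θ x) p = 0 := by
          rw [Polynomial.aeval_algHom_apply, hev, map_zero]
        rw [hx] at h1
        rwa [Polynomial.aeval_def, Polynomial.eval₂_eq_eval_map,
          ← Polynomial.coeff_zero_eq_eval_zero, Polynomial.coeff_map] at h1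
      obtain ⟨q, hq⟩ := Polynomial.X_dvd_iff.mpr hc0
      have hqmonic : q.Monic :=
        Polynomial.Monic.of_mul_monic_left Polynomial.monic_X (hq ▸ hp)
      have hqdeg : q.natDegree ≤ N := by
        have := congrArg Polynomial.natDegree hq
        rw [Polynomial.Monic.natDegree_mul Polynomial.monic_X hqmonic,
          Polynomial.natDegree_X] at this
        omega
      have hqev : Polynomial.aeval x q = 0 := by
        have hxq : Polynomial.aeval x p = x * Polynomial.aeval x q := by
          rw [hq, map_mul, Polynomial.aeval_X]
        rw [hev] at hxq
        exact (mul_eq_zero.mp hxq.symm).resolve_left hx0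
      exact ih q hqmonic hqdeg hqev
  exact key p.natDegree p hp le_rfl haev

theorem exists_ringEquiv_integralClosure {A D : Type u} [CommRing A] [IsDomain A] [CommRing D]
    [IsDomain D] (f : A →+* D) (hinj : Function.Injective f)
    (hint : ∀ x : D, f.IsIntegralElem x) (hai : AIClosed D) :
    ∃ Φ : D ≃+* integralClosure A (AlgebraicClosure (FractionRing A)),
      ∀ a : A, Φ (f a) =
        algebraMap A (integralClosure A (AlgebraicClosure (FractionRing A))) a := by
  letI : Algebra A D := f.toAlgebra
  haveI : Module.IsTorsionFree A D := Module.isTorsionFree_iff_algebraMap_injective.mpr hinj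
  haveI : Algebra.IsAlgebraic A D := ⟨fun x => (show IsIntegral A x from hint x).isAlgebraic⟩
  have hAΩ : Function.Injective (algebraMap A (AlgebraicClosure (FractionRing A))) := by
    rw [IsScalarTower.algebraMap_eq A (FractionRing A) (AlgebraicClosure (FractionRing A))]
    exact (algebraMap (FractionRing A) (AlgebraicClosure (FractionRing A))).injective.comp
      (IsFractionRing.injective A (FractionRing A))
  haveI : Module.IsTorsionFree A (AlgebraicClosure (FractionRing A)) :=
    Module.isTorsionFree_iff_algebraMap_injective.mpr hAΩ
  let Θ : D →ₐ[A] AlgebraicClosure (FractionRing A) := IsAlgClosed.lift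
  have hΘinj : Function.Injective Θ := algHom_injective_of_isIntegral hAΩ (fun x => hint x) Θ
  have hmem : ∀ d : D, Θ d ∈ integralClosure A (AlgebraicClosure (FractionRing A)) :=
    fun d => IsIntegral.map Θ (hint d)
  have hsurj : ∀ z : AlgebraicClosure (FractionRing A), IsIntegral A z → ∃ d : D, Θ d = z := by
    rintro z ⟨p, hp, hpz⟩
    obtain ⟨m, hm⟩ := aiclosed_splits hai (p.map (algebraMap A D)) (hp.map _)
    have hev : Polynomial.eval z (p.map (algebraMap A (AlgebraicClosure (FractionRing A)))) = 0 := by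
      rw [Polynomial.eval_map]; exact hpz
    have hmapmap : p.map (algebraMap A (AlgebraicClosure (FractionRing A)))
        = (p.map (algebraMap A D)).map (Θ : D →+* AlgebraicClosure (FractionRing A)) := by
      rw [Polynomial.map_map, Θ.comp_algebraMap]
    rw [hmapmap, hm, Polynomial.map_multiset_prod, Multiset.map_map] at hev
    rw [Polynomial.eval_multiset_prod, Multiset.map_map] at hev
    have h0mem := Multiset.prod_eq_zero_iff.mp hev
    obtain ⟨a, hamem, ha⟩ := Multiset.mem_map.mp h0mem
    refine ⟨a, ?_⟩
    have ha' : z - Θ a = 0 := by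
      have hh : Polynomial.eval z (Polynomial.map (Θ : D →+* AlgebraicClosure (FractionRing A))
          (Polynomial.X - Polynomial.C a)) = 0 := ha
      rwa [Polynomial.map_sub, Polynomial.map_X, Polynomial.map_C, Polynomial.eval_sub,
        Polynomial.eval_X, Polynomial.eval_C] at hh
    exact (sub_eq_zero.mp ha').symm
  let φ : D →+* integralClosure A (AlgebraicClosure (FractionRing A)) :=
    (Θ.codRestrict (integralClosure A (AlgebraicClosure (FractionRing A))) hmem).toRingHom
  have hφbij : Function.Bijective φ := by
    constructor
    · intro d₁ d₂ h
      apply hΘinj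
      exact congrArg Subtype.val h
    · rintro ⟨z, hz⟩
      obtain ⟨d, hd⟩ := hsurj z hz
      exact ⟨d, Subtype.ext hd⟩
  refine ⟨RingEquiv.ofBijective φ hφbij, fun a => ?_⟩
  apply Subtype.ext
  show Θ (f a) = _
  have hfa : f a = algebraMap A D a := rfl
  rw [hfa, Θ.commutes]
  rfl

def idemEquivOfRingEquiv {S T : Type*} [CommRing S] [CommRing T] (e : S ≃+* T) :
    {s : S // IsIdempotentElem s} ≃ {t : T // IsIdempotentElem t} where
  toFun s := ⟨e s.1, by unfold IsIdempotentElem; rw [← map_mul, s.2]⟩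
  invFun t := ⟨e.symm t.1, by unfold IsIdempotentElem; rw [← map_mul, t.2]⟩
  left_inv s := Subtype.ext (e.symm_apply_apply s.1)
  right_inv t := Subtype.ext (e.apply_symm_apply t.1)

def idemPiEquiv {ι : Type*} (T : ι → Type*) [∀ i, CommRing (T i)] :
    {f : (∀ i, T i) // IsIdempotentElem f} ≃ ∀ i, {x : T i // IsIdempotentElem x} where
  toFun f i := ⟨f.1 i, congrFun f.2 i⟩
  invFun g := ⟨fun i => (g i).1, funext fun i => (g i).2⟩
  left_inv f := Subtype.ext rfl
  right_inv g := rfl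

noncomputable def idemDomainEquivBool {D : Type*} [CommRing D] [IsDomain D] :
    {x : D // IsIdempotentElem x} ≃ Bool := by
  classical
  exact {
    toFun := fun x => decide (x.1 = 1)
    invFun := fun b => if b then ⟨1, IsIdempotentElem.one⟩ else ⟨0, IsIdempotentElem.zero⟩
    left_inv := by
      rintro ⟨x, hx⟩
      rcases IsIdempotentElem.iff_eq_zero_or_one.mp hx with rfl | rfl <;> simp
    right_inv := by
      rintro (_|_) <;> simp }

theorem card_idem_pi (ι : Type u) [Finite ι] (T : ι → Type v) [∀ i, CommRing (T i)]
    [∀ i, IsDomain (T i)] :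
    Nat.card {f : (∀ i, T i) // IsIdempotentElem f} = 2 ^ Nat.card ι := by
  rw [Nat.card_congr ((idemPiEquiv T).trans (Equiv.piCongrRight fun i => idemDomainEquivBool))]
  rw [Nat.card_fun]
  simp

theorem idem_ext_of_minimalPrimes {S : Type u} [CommRing S] [IsReduced S] {e e' : S}
    (he : IsIdempotentElem e) (he' : IsIdempotentElem e')
    (h : ∀ q ∈ minimalPrimes S, (e ∈ q ↔ e' ∈ q)) : e = e' := by
  have hsub : e - e' ∈ sInf (minimalPrimes S) := by
    rw [Ideal.mem_sInf]
    intro q hq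
    haveI : q.IsPrime := hq.1.1
    haveI : IsDomain (S ⧸ q) := Ideal.Quotient.isDomain q
    have hqe : IsIdempotentElem (Ideal.Quotient.mk q e) := by
      unfold IsIdempotentElem; rw [← map_mul, he]
    have hqe' : IsIdempotentElem (Ideal.Quotient.mk q e') := by
      unfold IsIdempotentElem; rw [← map_mul, he']
    have hmem : e ∈ q ↔ e' ∈ q := h q hq
    have hqq : Ideal.Quotient.mk q e = Ideal.Quotient.mk q e' := by
      rcases IsIdempotentElem.iff_eq_zero_or_one.mp hqe with h1 | h1 <;>
        rcases IsIdempotentElem.iff_eq_zero_or_one.mp hqe' with h2 | h2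
      · rw [h1, h2]
      · exfalso
        have hh : e' ∈ q := hmem.mp (Ideal.Quotient.eq_zero_iff_mem.mp h1)
        rw [Ideal.Quotient.eq_zero_iff_mem.mpr hh] at h2
        exact zero_ne_one h2
      · exfalso
        have hh : e ∈ q := hmem.mpr (Ideal.Quotient.eq_zero_iff_mem.mp h2)
        rw [Ideal.Quotient.eq_zero_iff_mem.mpr hh] at h1
        exact zero_ne_one h1
      · rw [h1, h2]
    have hz := sub_eq_zero.mpr hqq
    rw [← map_sub] at hz
    exact Ideal.Quotient.eq_zero_iff_mem.mp hz
  rw [sInf_minimalPrimes_eq_bot S, Ideal.mem_bot] at hsub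
  exact sub_eq_zero.mp hsub

end Equivs

end AICAux

set_option maxHeartbeats 1600000 in
/-- For a reduced ring `R` with exactly `n` minimal primes, an absolute integral closure
`S` of `R` is `R`-isomorphic to `T = ∏_{p ∈ min(R)} (R/p)⁺` if and only if `S` has exactly
`2 ^ n` idempotents. -/
theorem isomorphic_to_minPlus_iff_idempotents (R : Type u) [CommRing R] [IsReduced R]
    (n : ℕ) (hfin : (minimalPrimes R).Finite) (hn : Nat.card (minimalPrimes R) = n)
    (S : Type u) [CommRing S] (g : R →+* S) (hg : IsAIC g) :
    (∃ e : S ≃+* ∀ p : minimalPrimes R,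
        integralClosure (R ⧸ (p : Ideal R))
          (AlgebraicClosure (FractionRing (R ⧸ (p : Ideal R)))),
      e.toRingHom.comp g = minPlusMap R) ↔
    Nat.card {s : S // IsIdempotentElem s} = 2 ^ n := by
  classical
  obtain ⟨hginj, hgint, hgtight, hgai⟩ := hg
  haveI : IsReduced S := AICAux.isReduced_of_tight g hginj hgtight
  haveI : Finite (minimalPrimes R) := hfin.to_subtype
  constructor
  · rintro ⟨e, -⟩
    rw [Nat.card_congr (AICAux.idemEquivOfRingEquiv e), AICAux.card_idem_pi, hn]
  · intro hcard
    haveI : Finite {s : S // IsIdempotentElem s} :=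
      Nat.finite_of_card_ne_zero (by rw [hcard]; positivity)
    have hQex : ∀ p : minimalPrimes R, ∃ q ∈ minimalPrimes S, q.comap g = (p : Ideal R) :=
      fun p => AICAux.exists_minimalPrime_comap_eq g hginj hgint p.2
    choose Q hQmin hQcomap using hQex
    have hQprime : ∀ p : minimalPrimes R, (Q p).IsPrime := fun p => (hQmin p).1.1
    have hQinj : Function.Injective Q := by
      intro p p' h
      apply Subtype.ext
      rw [← hQcomap p, ← hQcomap p', h]
    let cmap : minimalPrimes S → minimalPrimes R := fun q =>
      ⟨(q : Ideal S).comap g, AICAux.comap_minimalPrime g hfin hginj hgtight q.2⟩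
    have hAll : ∀ q : minimalPrimes S, Q (cmap q) = (q : Ideal S) := by
      intro q
      exact AICAux.minimalPrime_comap_injOn g hfin hginj hgint hgtight (hQmin _) q.2 (hQcomap _)
    have hbijc : Function.Bijective cmap := by
      constructor
      · intro q q' h
        apply Subtype.ext
        exact AICAux.minimalPrime_comap_injOn g hfin hginj hgint hgtight q.2 q'.2
          (congrArg Subtype.val h)
      · intro p
        refine ⟨⟨Q p, hQmin p⟩, ?_⟩
        exact Subtype.ext (hQcomap p)
    haveI : Finite (minimalPrimes S) := Finite.of_equiv _ (Equiv.ofBijective cmap hbijc).symm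
    let χ : {s : S // IsIdempotentElem s} → (minimalPrimes S → Prop) :=
      fun e q => (e : S) ∈ (q : Ideal S)
    have hχinj : Function.Injective χ := by
      intro e e' h
      apply Subtype.ext
      apply AICAux.idem_ext_of_minimalPrimes e.2 e'.2
      intro q hq
      exact iff_of_eq (congrFun h ⟨q, hq⟩)
    have hPropcard : Nat.card Prop = 2 := by
      rw [Nat.card_congr Equiv.propEquivBool]
      simp [Nat.card_eq_fintype_card]
    have hminScard : Nat.card (minimalPrimes S) = n := by
      rw [Nat.card_congr (Equiv.ofBijective cmap hbijc), hn]
    have hχbij : Function.Bijective χ := by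
      haveI : Fintype {s : S // IsIdempotentElem s} := Fintype.ofFinite _
      haveI : Fintype (minimalPrimes S) := Fintype.ofFinite _
      rw [Fintype.bijective_iff_injective_and_card]
      refine ⟨hχinj, ?_⟩
      have hc1 : Fintype.card {s : S // IsIdempotentElem s} = 2 ^ n := by
        rw [← Nat.card_eq_fintype_card, hcard]
      have hc2 : Fintype.card (minimalPrimes S → Prop) = 2 ^ n := by
        rw [← Nat.card_eq_fintype_card, Nat.card_fun, hPropcard, hminScard]
      rw [hc1, hc2]
    have hE : ∀ p : minimalPrimes R, ∃ ε : S, IsIdempotentElem ε ∧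
        ∀ q : minimalPrimes S, ((ε ∈ (q : Ideal S)) ↔ (q : Ideal S) ≠ Q p) := by
      intro p
      obtain ⟨e, he⟩ := hχbij.2 (fun q => (q : Ideal S) ≠ Q p)
      refine ⟨e.1, e.2, fun q => ?_⟩
      exact iff_of_eq (congrFun he q)
    choose ε hεidem hεmem using hE
    have hcomax : ∀ p p' : minimalPrimes R, p ≠ p' → IsCoprime (Q p) (Q p') := by
      intro p p' hne
      have h1 : ε p' ∈ Q p := (hεmem p' ⟨Q p, hQmin p⟩).mpr (fun hc => hne (hQinj hc))
      have h2 : (1 : S) - ε p' ∈ Q p' := by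
        have hnm : ε p' ∉ Q p' := fun h => ((hεmem p' ⟨Q p', hQmin p'⟩).mp h) rfl
        haveI : (Q p').IsPrime := hQprime p'
        haveI : IsDomain (S ⧸ Q p') := Ideal.Quotient.isDomain _
        have hqe : IsIdempotentElem (Ideal.Quotient.mk (Q p') (ε p')) := by
          unfold IsIdempotentElem; rw [← map_mul, hεidem p']
        rcases IsIdempotentElem.iff_eq_zero_or_one.mp hqe with h | h
        · exact absurd (Ideal.Quotient.eq_zero_iff_mem.mp h) hnm
        · have hz : Ideal.Quotient.mk (Q p') ((1:S) - ε p') = 0 := by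
            rw [map_sub, map_one, h, sub_self]
          exact Ideal.Quotient.eq_zero_iff_mem.mp hz
      rw [Ideal.isCoprime_iff_add, Ideal.one_eq_top, Ideal.eq_top_iff_one]
      have hsum : ε p' + ((1:S) - ε p') ∈ Q p + Q p' := by
        rw [Ideal.add_eq_sup]
        exact Submodule.add_mem_sup h1 h2
      have : ε p' + ((1:S) - ε p') = 1 := by ring
      rwa [this] at hsum
    have hInf : (⨅ p : minimalPrimes R, Q p) = ⊥ := by
      apply le_antisymm _ bot_le
      intro x hx
      have hxall : x ∈ sInf (minimalPrimes S) := by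
        rw [Ideal.mem_sInf]
        intro q hq
        have hqq := hAll ⟨q, hq⟩
        have hxm := (Ideal.mem_iInf.mp hx) (cmap ⟨q, hq⟩)
        rw [hqq] at hxm
        exact hxm
      rwa [AICAux.sInf_minimalPrimes_eq_bot S] at hxall
    let ψ : S →+* ∀ p : minimalPrimes R, S ⧸ Q p := Pi.ringHom fun p => Ideal.Quotient.mk (Q p)
    have hψbij : Function.Bijective ψ := by
      constructor
      · rw [injective_iff_map_eq_zero]
        intro s hs
        have hmem : s ∈ ⨅ p : minimalPrimes R, Q p := by
          rw [Ideal.mem_iInf]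
          intro p
          exact Ideal.Quotient.eq_zero_iff_mem.mp (congrFun hs p)
        rwa [hInf, Ideal.mem_bot] at hmem
      · intro y
        obtain ⟨z, hz⟩ := Ideal.quotientInfToPiQuotient_surj
          (fun p p' hne => hcomax p p' hne) y
        obtain ⟨x, rfl⟩ := Ideal.Quotient.mk_surjective z
        refine ⟨x, ?_⟩
        funext p
        rw [← hz]
        exact (Ideal.quotientInfToPiQuotient_mk' (fun p => Q p) x p).symm
    have hcomp : ∀ p : minimalPrimes R,
        ∃ Φ : (S ⧸ Q p) ≃+* integralClosure (R ⧸ (p : Ideal R))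
            (AlgebraicClosure (FractionRing (R ⧸ (p : Ideal R)))),
          ∀ r : R, Φ (Ideal.Quotient.mk (Q p) (g r)) =
            algebraMap (R ⧸ (p : Ideal R))
              (integralClosure (R ⧸ (p : Ideal R))
                (AlgebraicClosure (FractionRing (R ⧸ (p : Ideal R)))))
              (Ideal.Quotient.mk (p : Ideal R) r) := by
      intro p
      haveI : (p : Ideal R).IsPrime := p.2.1.1
      haveI : (Q p).IsPrime := hQprime p
      haveI : IsDomain (R ⧸ (p : Ideal R)) := Ideal.Quotient.isDomain _
      haveI : IsDomain (S ⧸ Q p) := Ideal.Quotient.isDomain _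
      have hle : (p : Ideal R) ≤ (Q p).comap g := le_of_eq (hQcomap p).symm
      have hf₀inj : Function.Injective (Ideal.quotientMap (Q p) g hle) :=
        Ideal.quotientMap_injective' (le_of_eq (hQcomap p))
      have hf₀int : ∀ x : S ⧸ Q p, (Ideal.quotientMap (Q p) g hle).IsIntegralElem x := by
        intro x
        obtain ⟨s, rfl⟩ := Ideal.Quotient.mk_surjective x
        obtain ⟨P, hP, hPs⟩ := hgint s
        refine ⟨P.map (Ideal.Quotient.mk (p : Ideal R)), hP.map _, ?_⟩
        rw [Polynomial.eval₂_map]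
        have hcom : (Ideal.quotientMap (Q p) g hle).comp (Ideal.Quotient.mk (p : Ideal R)) =
            (Ideal.Quotient.mk (Q p)).comp g :=
          Ideal.quotientMap_comp_mk hle
        rw [hcom, ← Polynomial.hom_eval₂, hPs, map_zero]
      have hDai : AIClosed (S ⧸ Q p) :=
        AICAux.aiclosed_of_surjective hgai (Ideal.Quotient.mk (Q p)) Ideal.Quotient.mk_surjective
      obtain ⟨Φ, hΦ⟩ := AICAux.exists_ringEquiv_integralClosure
        (Ideal.quotientMap (Q p) g hle) hf₀inj hf₀int hDai
      refine ⟨Φ, fun r => ?_⟩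
      have hm : Ideal.Quotient.mk (Q p) (g r) =
          Ideal.quotientMap (Q p) g hle (Ideal.Quotient.mk (p : Ideal R) r) :=
        (Ideal.quotientMap_mk).symm
      rw [hm, hΦ]
    choose Φ hΦ using hcomp
    refine ⟨(RingEquiv.ofBijective ψ hψbij).trans (RingEquiv.piCongrRight Φ), ?_⟩
    apply RingHom.ext
    intro r
    funext p
    show Φ p (ψ (g r) p) = minPlusMap R r p
    have hψgr : ψ (g r) p = Ideal.Quotient.mk (Q p) (g r) := rfl
    rw [hψgr, hΦ p r]
    rfl
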